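/- Let Q ≥ 1, g ∈ ℕ, Δ > 0, and α ∈ ℝ. Suppose that for every real β, the number of coprime pairs (b, q) with 1 ≤ b ≤ q², q ≤ Q, and ‖b/q² − β‖ ≤ gΔ is at most C·(Q/(gΔ))^ε·(Q³gΔ + Q^{1/2}). Then the number M(α) of triples (a, q) with 0 ≤ a ≤ gq² − 1, gcd(a, gq²) = 1, 1 ≤ q ≤ Q, and ‖a/(gq²) − α‖ ≤ Δ satisfies M(α) ≪ (1 + gΔ)(Q³gΔ + Q^{1/2})(QΔ^{−1})^ε, with implied constant depending only on C and ε. -/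

import Mathlib

/-- Distance from a real number to the nearest integer. -/
noncomputable def nint (θ : ℝ) : ℝ := |θ - round θ|

lemma nint_le (θ : ℝ) (m : ℤ) : nint θ ≤ |θ - m| := round_le θ m

lemma nint_add_int (θ : ℝ) (m : ℤ) : nint (θ + m) = nint θ := by
  unfold nint
  rw [round_add_intCast]
  push_cast
  ring_nf

lemma set_prod_ncard {α β : Type*} (s : Set α) (t : Set β) :
    (s ×ˢ t).ncard = s.ncard * t.ncard := by
  rw [← Nat.card_coe_set_eq, ← Nat.card_coe_set_eq, ← Nat.card_coe_set_eq,
    Nat.card_congr (Equiv.Set.prod s t), Nat.card_prod]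

/-- Assuming the Baier–Zhao large sieve counting estimate for square moduli
(for the dilated quantity `gΔ`), the number `M(α)` of fractions `a/(gq²)`
with `gcd(a, gq²) = 1`, `0 ≤ a ≤ gq² − 1`, `1 ≤ q ≤ Q`, lying within `Δ` of `α`
satisfies `M(α) ≪ (1 + gΔ)(Q³gΔ + Q^{1/2})(QΔ⁻¹)^ε`. -/
theorem spacing_count_gq_squared (ε C : ℝ) (hε : 0 < ε) (hC : 0 < C) :
    ∃ C' > 0, ∀ (Q Δ α : ℝ) (g : ℕ), 1 ≤ Q → 0 < Δ → 1 ≤ g →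
    (∀ β : ℝ,
      (({p : ℕ × ℕ | 1 ≤ p.1 ∧ p.1 ≤ p.2 ^ 2 ∧ (p.2 : ℝ) ≤ Q ∧
          Nat.Coprime p.1 (p.2 ^ 2) ∧
          nint ((p.1 : ℝ) / (p.2 : ℝ) ^ 2 - β) ≤ (g : ℝ) * Δ}.ncard : ℝ)
        ≤ C * (Q / ((g : ℝ) * Δ)) ^ ε * (Q ^ 3 * g * Δ + Q ^ ((1 : ℝ) / 2)))) →
    (({p : ℕ × ℕ | p.1 < g * p.2 ^ 2 ∧ Nat.Coprime p.1 (g * p.2 ^ 2) ∧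
        1 ≤ p.2 ∧ (p.2 : ℝ) ≤ Q ∧
        nint ((p.1 : ℝ) / ((g : ℝ) * (p.2 : ℝ) ^ 2) - α) ≤ Δ}.ncard : ℝ)
      ≤ C' * (1 + g * Δ) * (Q ^ 3 * g * Δ + Q ^ ((1 : ℝ) / 2)) * (Q * Δ⁻¹) ^ ε) := by
  refine ⟨2 * C, by positivity, ?_⟩
  intro Q Δ α g hQ hΔ hg hyp
  have hg0 : (0 : ℝ) < g := by exact_mod_cast Nat.lt_of_lt_of_le Nat.zero_lt_one hg
  set T : Set (ℕ × ℕ) := {p : ℕ × ℕ | 1 ≤ p.1 ∧ p.1 ≤ p.2 ^ 2 ∧ (p.2 : ℝ) ≤ Q ∧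
      Nat.Coprime p.1 (p.2 ^ 2) ∧
      nint ((p.1 : ℝ) / (p.2 : ℝ) ^ 2 - ((g : ℝ) * α)) ≤ (g : ℝ) * Δ} with hT
  set S : Set (ℕ × ℕ) := {p : ℕ × ℕ | p.1 < g * p.2 ^ 2 ∧ Nat.Coprime p.1 (g * p.2 ^ 2) ∧
      1 ≤ p.2 ∧ (p.2 : ℝ) ≤ Q ∧
      nint ((p.1 : ℝ) / ((g : ℝ) * (p.2 : ℝ) ^ 2) - α) ≤ Δ} with hS
  set K : ℕ := ⌊2 * (g : ℝ) * Δ⌋₊ + 1 with hK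
  -- auxiliary functions
  set bf : ℕ × ℕ → ℕ := fun p => if p.1 % p.2 ^ 2 = 0 then p.2 ^ 2 else p.1 % p.2 ^ 2 with hbf
  set mf : ℕ × ℕ → ℤ := fun p => round ((p.1 : ℝ) / ((g : ℝ) * (p.2 : ℝ) ^ 2) - α) with hmf
  set ψ : ℕ × ℕ → ℤ := fun p => ((p.1 / p.2 ^ 2 : ℕ) : ℤ) - (g : ℤ) * mf p with hψdef
  set L : ℕ → ℕ → ℝ := fun b q =>
      (g : ℝ) * α - ((b % q ^ 2 : ℕ) : ℝ) / (q : ℝ) ^ 2 - (g : ℝ) * Δ with hLdef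
  set Φ : ℕ × ℕ → (ℕ × ℕ) × ℕ :=
      fun p => ((bf p, p.2), (ψ p - ⌈L (bf p) p.2⌉).toNat) with hΦ
  -- basic facts for p ∈ S
  have hbmod : ∀ p : ℕ × ℕ, 1 ≤ p.2 → bf p % p.2 ^ 2 = p.1 % p.2 ^ 2 := by
    intro p hq
    have hq2 : 0 < p.2 ^ 2 := pow_pos hq 2
    by_cases h : p.1 % p.2 ^ 2 = 0
    · simp [hbf, h, Nat.mod_self]
    · simp [hbf, h, Nat.mod_eq_of_lt (Nat.mod_lt _ hq2)]
  have hkey : ∀ p ∈ S, |(ψ p : ℝ) - ((g : ℝ) * α - ((p.1 % p.2 ^ 2 : ℕ) : ℝ) / (p.2 : ℝ) ^ 2)|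
      ≤ (g : ℝ) * Δ := by
    rintro ⟨a, q⟩ ⟨hp1, hp2, hp3, hp4, hp5⟩
    have hq1 : 1 ≤ q := hp3
    have hq0 : (0 : ℝ) < (q : ℝ) ^ 2 := by
      have : (1 : ℝ) ≤ (q : ℝ) := by exact_mod_cast hq1
      positivity
    have ha : (q : ℝ) ^ 2 * ((a / q ^ 2 : ℕ) : ℝ) + ((a % q ^ 2 : ℕ) : ℝ) = (a : ℝ) := by
      exact_mod_cast congrArg (Nat.cast : ℕ → ℝ) (Nat.div_add_mod a (q ^ 2))
    have hψR : (ψ (a, q) : ℝ) = ((a / q ^ 2 : ℕ) : ℝ) - (g : ℝ) * ((mf (a, q) : ℤ) : ℝ) := by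
      simp only [hψdef, Int.cast_sub, Int.cast_mul, Int.cast_natCast]
    have hcastn : ((a / q ^ 2 : ℕ) : ℝ) = ((a : ℝ) - ((a % q ^ 2 : ℕ) : ℝ)) / (q : ℝ) ^ 2 := by
      field_simp
      linarith [ha]
    rw [hψR, hcastn]
    have hid : ((a : ℝ) - ((a % q ^ 2 : ℕ) : ℝ)) / (q : ℝ) ^ 2 - (g : ℝ) * ((mf (a, q) : ℤ) : ℝ)
        - ((g : ℝ) * α - ((a % q ^ 2 : ℕ) : ℝ) / (q : ℝ) ^ 2)
        = (g : ℝ) * (((a : ℝ) / ((g : ℝ) * (q : ℝ) ^ 2) - α) - ((mf (a, q) : ℤ) : ℝ)) := by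
      field_simp
      ring
    rw [hid, abs_mul, abs_of_pos hg0]
    have hnint : |((a : ℝ) / ((g : ℝ) * (q : ℝ) ^ 2) - α) - ((mf (a, q) : ℤ) : ℝ)|
        = nint ((a : ℝ) / ((g : ℝ) * (q : ℝ) ^ 2) - α) := by
      simp only [hmf, nint]
    rw [hnint]
    exact mul_le_mul_of_nonneg_left hp5 hg0.le
  have hceil : ∀ p ∈ S, ⌈L (bf p) p.2⌉ ≤ ψ p := by
    intro p hp
    have h := hkey p hp
    have hq : 1 ≤ p.2 := hp.2.2.1
    have hLval : L (bf p) p.2 = (g : ℝ) * α - ((p.1 % p.2 ^ 2 : ℕ) : ℝ) / (p.2 : ℝ) ^ 2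
        - (g : ℝ) * Δ := by
      simp only [hLdef, hbmod p hq]
    rw [abs_le] at h
    exact Int.ceil_le.2 (by rw [hLval]; linarith [h.1])
  have hklt : ∀ p ∈ S, (ψ p - ⌈L (bf p) p.2⌉).toNat < K := by
    intro p hp
    have h := hkey p hp
    have hq : 1 ≤ p.2 := hp.2.2.1
    have hLval : L (bf p) p.2 = (g : ℝ) * α - ((p.1 % p.2 ^ 2 : ℕ) : ℝ) / (p.2 : ℝ) ^ 2
        - (g : ℝ) * Δ := by
      simp only [hLdef, hbmod p hq]
    rw [abs_le] at h
    have e : ((ψ p - ⌈L (bf p) p.2⌉).toNat : ℤ) = ψ p - ⌈L (bf p) p.2⌉ :=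
      Int.toNat_of_nonneg (sub_nonneg.2 (hceil p hp))
    have e' : (((ψ p - ⌈L (bf p) p.2⌉).toNat : ℕ) : ℝ) = (ψ p : ℝ) - ((⌈L (bf p) p.2⌉ : ℤ) : ℝ) := by
      exact_mod_cast congrArg (Int.cast : ℤ → ℝ) e
    have hLle : (g : ℝ) * α - ((p.1 % p.2 ^ 2 : ℕ) : ℝ) / (p.2 : ℝ) ^ 2 - (g : ℝ) * Δ
        ≤ ((⌈L (bf p) p.2⌉ : ℤ) : ℝ) := le_trans (le_of_eq hLval.symm) (Int.le_ceil _)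
    have h1 : ((ψ p - ⌈L (bf p) p.2⌉).toNat : ℝ) ≤ 2 * (g : ℝ) * Δ := by
      rw [e']
      linarith [h.2]
    have h2 : (ψ p - ⌈L (bf p) p.2⌉).toNat ≤ ⌊2 * (g : ℝ) * Δ⌋₊ := Nat.le_floor h1
    rw [hK]
    exact Nat.lt_succ_of_le h2
  -- Φ maps S into T ×ˢ Iio K
  have hmaps : ∀ p ∈ S, Φ p ∈ T ×ˢ Set.Iio K := by
    rintro ⟨a, q⟩ hp
    obtain ⟨hp1, hp2, hp3, hp4, hp5⟩ := hp
    have hpS : (a, q) ∈ S := ⟨hp1, hp2, hp3, hp4, hp5⟩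
    have hq2 : 0 < q ^ 2 := pow_pos hp3 2
    have hco : Nat.Coprime a (q ^ 2) :=
      Nat.Coprime.coprime_dvd_right (dvd_mul_left (q ^ 2) g) hp2
    refine ⟨?_, hklt (a, q) hpS⟩
    show (bf (a, q), q) ∈ T
    have c1 : 1 ≤ bf (a, q) := by
      by_cases h : a % q ^ 2 = 0
      · simp only [hbf, h, if_true]; exact hq2
      · simp only [hbf, h, if_false]; exact Nat.one_le_iff_ne_zero.mpr h
    have c2 : bf (a, q) ≤ q ^ 2 := by
      by_cases h : a % q ^ 2 = 0
      · simp [hbf, h]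
      · simp only [hbf, h, if_false]; exact (Nat.mod_lt _ hq2).le
    have c4 : Nat.Coprime (bf (a, q)) (q ^ 2) := by
      by_cases h : a % q ^ 2 = 0
      · have hdvd : q ^ 2 ∣ a := Nat.dvd_of_mod_eq_zero h
        have hone : q ^ 2 = 1 := Nat.dvd_one.mp (hco ▸ Nat.dvd_gcd hdvd dvd_rfl)
        simp [hbf, h, hone]
      · simp only [hbf, h, if_false]
        rw [Nat.Coprime, ← Nat.gcd_rec]
        exact hco.symm
    have c5 : nint ((bf (a, q) : ℝ) / (q : ℝ) ^ 2 - (g : ℝ) * α) ≤ (g : ℝ) * Δ := by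
      have h := hkey (a, q) hpS
      have hq0 : ((q : ℝ) ^ 2) ≠ 0 := by
        have : (1 : ℝ) ≤ (q : ℝ) := by exact_mod_cast hp3
        positivity
      have hcast : ((bf (a, q) : ℕ) : ℝ) / (q : ℝ) ^ 2 - (g : ℝ) * α
          = (((a % q ^ 2 : ℕ) : ℝ) / (q : ℝ) ^ 2 - (g : ℝ) * α)
            + (Int.cast (if a % q ^ 2 = 0 then (1 : ℤ) else 0) : ℝ) := by
        by_cases hcase : a % q ^ 2 = 0
        · simp only [hbf, hcase, if_true, Int.cast_one]
          push_cast
          field_simp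
          ring
        · simp only [hbf, hcase, if_false, Int.cast_zero]
          push_cast
          ring
      rw [hcast, nint_add_int]
      refine le_trans (nint_le _ (-ψ (a, q))) ?_
      have hgoal_eq : (((a % q ^ 2 : ℕ) : ℝ) / (q : ℝ) ^ 2 - (g : ℝ) * α) - (((-ψ (a, q) : ℤ)) : ℝ)
          = (ψ (a, q) : ℝ) - ((g : ℝ) * α - ((a % q ^ 2 : ℕ) : ℝ) / (q : ℝ) ^ 2) := by
        rw [Int.cast_neg]
        ring
      rw [hgoal_eq]
      exact h
    exact ⟨c1, c2, hp4, c4, c5⟩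
  -- Φ is injective on S
  have hinj : Set.InjOn Φ S := by
    rintro ⟨a, q⟩ hp ⟨a', q'⟩ hp' heq
    simp only [hΦ, Prod.mk.injEq] at heq
    obtain ⟨⟨hb, hq⟩, hk⟩ := heq
    subst hq
    rw [← hb] at hk
    have hc1 : ⌈L (bf (a, q)) q⌉ ≤ ψ (a, q) := hceil (a, q) hp
    have hc2 : ⌈L (bf (a', q)) q⌉ ≤ ψ (a', q) := hceil (a', q) hp'
    rw [← hb] at hc2
    have e1 : ((ψ (a, q) - ⌈L (bf (a, q)) q⌉).toNat : ℤ) = ψ (a, q) - ⌈L (bf (a, q)) q⌉ :=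
      Int.toNat_of_nonneg (sub_nonneg.2 hc1)
    have e2 : ((ψ (a', q) - ⌈L (bf (a, q)) q⌉).toNat : ℤ) = ψ (a', q) - ⌈L (bf (a, q)) q⌉ :=
      Int.toNat_of_nonneg (sub_nonneg.2 hc2)
    have h1 : ψ (a, q) - ⌈L (bf (a, q)) q⌉ = ψ (a', q) - ⌈L (bf (a, q)) q⌉ := by
      rw [← e1, ← e2, hk]
    have hψeq : ψ (a, q) = ψ (a', q) := sub_left_inj.mp h1
    have hq2 : 0 < q ^ 2 := pow_pos hp.2.2.1 2
    have hn : a / q ^ 2 < g := (Nat.div_lt_iff_lt_mul hq2).2 (by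
      have := hp.1; simpa [mul_comm] using this)
    have hn' : a' / q ^ 2 < g := (Nat.div_lt_iff_lt_mul hq2).2 (by
      have := hp'.1; simpa [mul_comm] using this)
    have hdvd : (g : ℤ) ∣ ((a / q ^ 2 : ℕ) : ℤ) - ((a' / q ^ 2 : ℕ) : ℤ) := by
      refine ⟨mf (a, q) - mf (a', q), ?_⟩
      simp only [hψdef] at hψeq
      linear_combination hψeq
    have habs : |((a / q ^ 2 : ℕ) : ℤ) - ((a' / q ^ 2 : ℕ) : ℤ)| < (g : ℤ) := by
      have b1 : ((a / q ^ 2 : ℕ) : ℤ) < (g : ℤ) := by exact_mod_cast hn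
      have b2 : ((a' / q ^ 2 : ℕ) : ℤ) < (g : ℤ) := by exact_mod_cast hn'
      have b3 : (0 : ℤ) ≤ ((a / q ^ 2 : ℕ) : ℤ) := Int.natCast_nonneg _
      have b4 : (0 : ℤ) ≤ ((a' / q ^ 2 : ℕ) : ℤ) := Int.natCast_nonneg _
      rw [abs_lt]
      constructor <;> linarith
    have hdiv : a / q ^ 2 = a' / q ^ 2 := by
      have h0 := Int.eq_zero_of_abs_lt_dvd hdvd habs
      have : ((a / q ^ 2 : ℕ) : ℤ) = ((a' / q ^ 2 : ℕ) : ℤ) := by linarith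
      exact_mod_cast this
    have hmod : a % q ^ 2 = a' % q ^ 2 := by
      have h1 := hbmod (a, q) hp.2.2.1
      have h2 := hbmod (a', q) hp'.2.2.1
      simp only at h1 h2
      rw [← h1, ← h2, hb]
    have haa : a = a' := by
      have d1 := Nat.div_add_mod a (q ^ 2)
      have d2 := Nat.div_add_mod a' (q ^ 2)
      rw [← d1, ← d2, hdiv, hmod]
    rw [haa]
  -- T is finite
  have hTfin : T.Finite := by
    apply Set.Finite.subset ((Set.finite_Icc 1 (⌊Q⌋₊ ^ 2)).prod (Set.finite_Icc 0 ⌊Q⌋₊))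
    rintro ⟨b, q⟩ ⟨h1, h2, h3, _⟩
    have hqQ : q ≤ ⌊Q⌋₊ := Nat.le_floor h3
    exact ⟨⟨h1, h2.trans (Nat.pow_le_pow_left hqQ 2)⟩, Nat.zero_le _, hqQ⟩
  -- counting
  have hcount : (S.ncard : ℝ) ≤ (T.ncard : ℝ) * K := by
    have h1 : S.ncard = (Φ '' S).ncard := (Set.ncard_image_of_injOn hinj).symm
    have h2 : (Φ '' S).ncard ≤ (T ×ˢ Set.Iio K).ncard := by
      apply Set.ncard_le_ncard
      · rintro x ⟨p, hp, rfl⟩; exact hmaps p hp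
      · exact hTfin.prod (Set.finite_Iio K)
    have h3 : (T ×ˢ Set.Iio K).ncard = T.ncard * K := by
      rw [set_prod_ncard, ← Finset.coe_range, Set.ncard_coe_finset, Finset.card_range]
    have : S.ncard ≤ T.ncard * K := by rw [h1, ← h3]; exact h2
    exact_mod_cast this
  -- assemble
  have hTbound := hyp ((g : ℝ) * α)
  have hA : (0 : ℝ) ≤ Q ^ 3 * g * Δ + Q ^ ((1 : ℝ) / 2) := by positivity
  have hKR : (K : ℝ) ≤ 2 * (1 + (g : ℝ) * Δ) := by
    have : ((⌊2 * (g : ℝ) * Δ⌋₊ : ℕ) : ℝ) ≤ 2 * (g : ℝ) * Δ :=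
      Nat.floor_le (by positivity)
    push_cast [hK]
    linarith
  have hrpow : (Q / ((g : ℝ) * Δ)) ^ ε ≤ (Q * Δ⁻¹) ^ ε := by
    apply Real.rpow_le_rpow (by positivity) _ hε.le
    rw [div_le_iff₀ (by positivity)]
    have h1 : (1 : ℝ) ≤ (g : ℝ) := by exact_mod_cast hg
    calc Q = Q * Δ⁻¹ * Δ := by field_simp
      _ ≤ Q * Δ⁻¹ * ((g : ℝ) * Δ) := by
          apply mul_le_mul_of_nonneg_left _ (by positivity)
          nlinarith
  calc (S.ncard : ℝ) ≤ (T.ncard : ℝ) * K := hcount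
    _ ≤ (C * (Q / ((g : ℝ) * Δ)) ^ ε * (Q ^ 3 * g * Δ + Q ^ ((1 : ℝ) / 2)))
        * (2 * (1 + (g : ℝ) * Δ)) := by
        apply mul_le_mul hTbound hKR (by positivity)
        positivity
    _ ≤ (C * (Q * Δ⁻¹) ^ ε * (Q ^ 3 * g * Δ + Q ^ ((1 : ℝ) / 2)))
        * (2 * (1 + (g : ℝ) * Δ)) := by
        gcongr
    _ = 2 * C * (1 + g * Δ) * (Q ^ 3 * g * Δ + Q ^ ((1 : ℝ) / 2)) * (Q * Δ⁻¹) ^ ε := by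
        ring
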